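/- Let B, Z : ℝ → ℝ be continuous functions with limsup_{s→∞}(B(s) - Z(s)) = -∞. Then the functions Q(Z,B)(t) = sup_{s ≥ t} {(B(s)-B(t)) - (Z(s)-Z(t))}, D(Z,B)(t) = Z(t) + Q(Z,B)(0) - Q(Z,B)(t), and R(Z,B)(t) = B(t) + Q(Z,B)(t) - Q(Z,B)(0) are continuous on ℝ. -/

import Mathlib

open Filter Set

/-- Forward queueing map `Q(Z,B)(t) = sup_{s ≥ t} {B(t,s) - Z(t,s)}` where
`f(t,s) := f(s) - f(t)`. -/
noncomputable def Qf (Z B : ℝ → ℝ) (t : ℝ) : ℝ :=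
  sSup ((fun s => (B s - B t) - (Z s - Z t)) '' Ici t)

/-- Forward queueing map `D(Z,B)(t) = Z(t) + Q(Z,B)(0) - Q(Z,B)(t)`. -/
noncomputable def Df (Z B : ℝ → ℝ) (t : ℝ) : ℝ := Z t + Qf Z B 0 - Qf Z B t

/-- Forward queueing map `R(Z,B)(t) = B(t) + Q(Z,B)(t) - Q(Z,B)(0)`. -/
noncomputable def Rf (Z B : ℝ → ℝ) (t : ℝ) : ℝ := B t + Qf Z B t - Qf Z B 0

private lemma sup_tail_eq (X : ℝ → ℝ) (hXc : Continuous X) {t T : ℝ} (htT : t ≤ T)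
    (hT : ∀ s, T ≤ s → X s ≤ X t) :
    BddAbove (X '' Ici t) ∧ sSup (X '' Ici t) = sSup (X '' Icc t T) := by
  have hbddc : BddAbove (X '' Icc t T) := (isCompact_Icc.image hXc).bddAbove
  have hub : ∀ y ∈ X '' Ici t, y ≤ sSup (X '' Icc t T) := by
    rintro y ⟨s, hs, rfl⟩
    rcases le_total s T with h | h
    · exact le_csSup hbddc ⟨s, ⟨hs, h⟩, rfl⟩
    · exact (hT s h).trans (le_csSup hbddc ⟨t, ⟨le_rfl, htT⟩, rfl⟩)
  refine ⟨⟨_, hub⟩, le_antisymm (csSup_le ⟨X t, mem_image_of_mem _ self_mem_Ici⟩ hub)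
    (csSup_le_csSup ⟨_, hub⟩ ⟨X t, mem_image_of_mem _ ⟨le_rfl, htT⟩⟩
      (image_mono (fun s hs => hs.1)))⟩

/-- Lemma 2.4: continuity of the queueing maps `Q`, `D`, `R`. -/
theorem queueing_maps_continuous (Z B : ℝ → ℝ)
    (hZ : Continuous Z) (hB : Continuous B)
    (hlim : Tendsto (fun s => B s - Z s) atTop atBot) :
    Continuous (Qf Z B) ∧ Continuous (Df Z B) ∧ Continuous (Rf Z B) := by
  set X : ℝ → ℝ := fun s => B s - Z s with hXdef
  have hXc : Continuous X := hB.sub hZ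
  -- continuity of M : t ↦ sSup (X '' Ici t)
  have hM : Continuous fun t => sSup (X '' Ici t) := by
    rw [continuous_iff_continuousAt]
    intro t₀
    rw [Metric.continuousAt_iff]
    intro ε hε
    obtain ⟨T₀, hT₀⟩ := eventually_atTop.mp (tendsto_atBot.mp hlim (X t₀ - 1))
    set T : ℝ := max T₀ (t₀ + 1) with hTdef
    have hTtail : ∀ s, T ≤ s → X s ≤ X t₀ - 1 := fun s hs =>
      hT₀ s ((le_max_left _ _).trans hs)
    have ht₀T : t₀ + 1 ≤ T := le_max_right _ _
    -- δ₁ from continuity of X at t₀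
    obtain ⟨δ₁, hδ₁pos, hδ₁⟩ := Metric.continuousAt_iff.mp hXc.continuousAt 1 one_pos
    -- uniform continuity on K = Icc (t₀ - 1) T
    have hucK := (isCompact_Icc (a := t₀ - 1) (b := T)).uniformContinuousOn_of_continuous
      hXc.continuousOn
    obtain ⟨δ₂, hδ₂pos, hδ₂⟩ := Metric.uniformContinuousOn_iff.mp hucK (ε / 2) (by linarith)
    refine ⟨min (min δ₁ δ₂) 1, by positivity, fun {t} ht => ?_⟩
    have htδ₁ : dist t t₀ < δ₁ := lt_of_lt_of_le ht ((min_le_left _ _).trans (min_le_left _ _))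
    have htδ₂ : dist t t₀ < δ₂ := lt_of_lt_of_le ht ((min_le_left _ _).trans (min_le_right _ _))
    have ht1 : dist t t₀ < 1 := lt_of_lt_of_le ht (min_le_right _ _)
    have habs : |t - t₀| < 1 := by rwa [Real.dist_eq] at ht1
    have htlow : t₀ - 1 ≤ t := by
      have := abs_lt.mp habs; linarith [this.1]
    have hthigh : t ≤ t₀ + 1 := by
      have := abs_lt.mp habs; linarith [this.2]
    have htT : t ≤ T := hthigh.trans ht₀T
    have ht₀T' : t₀ ≤ T := by linarith
    have hXt : |X t - X t₀| < 1 := by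
      have := hδ₁ htδ₁; rwa [Real.dist_eq] at this
    have hTtailt : ∀ s, T ≤ s → X s ≤ X t := fun s hs => by
      have := hTtail s hs; have := abs_lt.mp hXt; linarith
    obtain ⟨hbddt, heqt⟩ := sup_tail_eq X hXc htT hTtailt
    obtain ⟨hbdd0, heq0⟩ := sup_tail_eq X hXc ht₀T' (fun s hs => by
      have := hTtail s hs; linarith)
    rw [heqt, heq0]
    -- now compare sSup (X '' Icc t T) and sSup (X '' Icc t₀ T)
    have hbc : ∀ u : ℝ, u ≤ T → BddAbove (X '' Icc u T) :=
      fun u _ => (isCompact_Icc.image hXc).bddAbove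
    have hnc : ∀ u : ℝ, u ≤ T → (X '' Icc u T).Nonempty :=
      fun u hu => ⟨X u, mem_image_of_mem _ ⟨le_rfl, hu⟩⟩
    have key : ∀ u v : ℝ, t₀ - 1 ≤ u → u ≤ v → v ≤ T → dist u v < δ₂ →
        sSup (X '' Icc u T) ≤ sSup (X '' Icc v T) + ε / 2 := by
      intro u v hu huv hvT hd
      refine csSup_le (hnc u (huv.trans hvT)) ?_
      rintro y ⟨s, ⟨hs1, hs2⟩, rfl⟩
      rcases le_total v s with h | h
      · have h' : X s ≤ sSup (X '' Icc v T) := le_csSup (hbc v hvT) ⟨s, ⟨h, hs2⟩, rfl⟩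
        exact h'.trans (le_add_of_nonneg_right (by linarith))
      · have hsK : s ∈ Icc (t₀ - 1) T := ⟨hu.trans hs1, hs2⟩
        have hvK : v ∈ Icc (t₀ - 1) T := ⟨hu.trans huv, hvT⟩
        have hdsv : dist s v < δ₂ := by
          rw [Real.dist_eq, abs_of_nonpos (by linarith)]
          rw [Real.dist_eq, abs_of_nonpos (by linarith)] at hd
          linarith
        have := hδ₂ s hsK v hvK hdsv
        rw [Real.dist_eq] at this
        have h1 : X s ≤ X v + ε / 2 := by have := abs_lt.mp this; linarith [this.1]
        have h2 : X v ≤ sSup (X '' Icc v T) := le_csSup (hbc v hvT) ⟨v, ⟨le_rfl, hvT⟩, rfl⟩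
        exact h1.trans (add_le_add_left h2 _)
    have hmono : ∀ u v : ℝ, u ≤ v → v ≤ T → sSup (X '' Icc v T) ≤ sSup (X '' Icc u T) := by
      intro u v huv hvT
      exact csSup_le_csSup (hbc u (huv.trans hvT)) (hnc v hvT)
        (image_mono (fun s hs => ⟨huv.trans hs.1, hs.2⟩))
    have hfin : |sSup (X '' Icc t T) - sSup (X '' Icc t₀ T)| ≤ ε / 2 := by
      rcases le_total t t₀ with h | h
      · have h1 := key t t₀ htlow h ht₀T' htδ₂
        have h2 := hmono t t₀ h ht₀T'
        rw [abs_le]; constructor <;> linarith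
      · have hd' : dist t₀ t < δ₂ := by rwa [dist_comm]
        have h1 := key t₀ t (by linarith) h htT hd'
        have h2 := hmono t₀ t h htT
        rw [abs_le]; constructor <;> linarith
    rw [Real.dist_eq]
    linarith
  -- Qf as M - X
  have hQeq : Qf Z B = fun t => sSup (X '' Ici t) - X t := by
    funext t
    obtain ⟨T₀, hT₀⟩ := eventually_atTop.mp (tendsto_atBot.mp hlim (X t))
    have htT : t ≤ max T₀ t := le_max_right _ _
    have hTt : ∀ s, max T₀ t ≤ s → X s ≤ X t := fun s hs =>
      hT₀ s ((le_max_left _ _).trans hs)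
    obtain ⟨hbdd, -⟩ := sup_tail_eq X hXc htT hTt
    have hne : (X '' Ici t).Nonempty := ⟨X t, mem_image_of_mem _ self_mem_Ici⟩
    have himg : (fun s => (B s - B t) - (Z s - Z t)) '' Ici t
        = (fun y => y - X t) '' (X '' Ici t) := by
      rw [← image_comp]
      exact image_congr (fun s _ => by simp only [Function.comp, hXdef]; ring)
    have hmap := Monotone.map_csSup_of_continuousAt
      (f := fun y => y - X t) ((continuous_id.sub continuous_const).continuousAt)
      (fun a b hab => sub_le_sub_right hab _) hne hbdd
    rw [Qf, himg, ← hmap]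
  have hQc : Continuous (Qf Z B) := by
    rw [hQeq]; exact hM.sub hXc
  exact ⟨hQc, (hZ.add continuous_const).sub hQc, (hB.add hQc).sub continuous_const⟩
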